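/- When n is odd, the coefficient ω(n) of q^n in Ramanujan's third order mock theta function ω(q) = Σ_{k≥0} q^{2k²+2k}/∏_{j=0}^{k}(1−q^{2j+1})² is even. -/

import Mathlib

open PowerSeries Finset

/-- Geometric series for `X^s` over `ℤ`. -/
noncomputable def geomZ (s : ℕ) : PowerSeries ℤ :=
  PowerSeries.mk fun m => if s ∣ m then 1 else 0

lemma one_sub_X_pow_mul_geomZ (s : ℕ) (hs : 0 < s) :
    ((1 - PowerSeries.X ^ s : PowerSeries ℤ)) * geomZ s = 1 := by
  ext m
  rw [sub_mul, one_mul, map_sub, coeff_X_pow_mul']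
  simp only [geomZ, coeff_mk, coeff_one]
  rcases Nat.eq_zero_or_pos m with rfl | hm
  · simp; omega
  · rw [if_neg hm.ne']
    by_cases hd : s ∣ m
    · have hsm : s ≤ m := Nat.le_of_dvd hm hd
      rw [if_pos hd, if_pos hsm, if_pos (Nat.dvd_sub hd dvd_rfl)]
      ring
    · rw [if_neg hd]
      split_ifs with hsm hd2
      · exact absurd ((Nat.sub_add_cancel hsm) ▸ Nat.dvd_add hd2 dvd_rfl) hd
      · ring
      · ring

lemma even_coeff_sq (f : PowerSeries ℤ) {m : ℕ} (hm : Odd m) :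
    (2 : ℤ) ∣ PowerSeries.coeff m (f * f) := by
  have h2 : ((2 : ℕ) : ℤ) = 2 := by norm_num
  rw [← h2, ← ZMod.intCast_zmod_eq_zero_iff_dvd, PowerSeries.coeff_mul]
  push_cast
  refine Finset.sum_involution (fun p _ => p.swap) ?_ ?_ ?_ ?_
  · intro p hp
    simp only [Prod.fst_swap, Prod.snd_swap]
    rw [mul_comm]
    exact CharTwo.add_self_eq_zero _
  · intro p hp _ h
    have h1 : p.2 = p.1 := congrArg Prod.fst h
    have h2 : p.1 + p.2 = m := Finset.HasAntidiagonal.mem_antidiagonal.mp hp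
    exact (Nat.not_even_iff_odd.mpr hm) ⟨p.1, by omega⟩
  · intro p hp
    simp only [Finset.HasAntidiagonal.mem_antidiagonal] at hp ⊢
    simpa [Prod.fst_swap, Prod.snd_swap, add_comm] using hp
  · intro p hp
    simp


lemma even_summand (f : PowerSeries ℤ) {n a : ℕ} (hn : Odd n) (ha : Even a) :
    (2 : ℤ) ∣ PowerSeries.coeff n (PowerSeries.X ^ a * f ^ 2) := by
  rw [coeff_X_pow_mul']
  split_ifs with h
  · rw [sq]
    exact even_coeff_sq f (Nat.Odd.sub_even h hn ha)
  · exact dvd_zero 2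

/-- The integer summand series. -/
noncomputable def summandZ (k : ℕ) : PowerSeries ℤ :=
  PowerSeries.X ^ (2 * k ^ 2 + 2 * k) *
    (∏ j ∈ Finset.range (k + 1), geomZ (2 * j + 1)) ^ 2

lemma map_geomZ (s : ℕ) (hs : 0 < s) :
    PowerSeries.map (Int.castRingHom ℚ) (geomZ s) =
      (1 - PowerSeries.X ^ s : PowerSeries ℚ)⁻¹ := by
  symm
  rw [PowerSeries.inv_eq_iff_mul_eq_one]
  · have := congrArg (PowerSeries.map (Int.castRingHom ℚ)) (one_sub_X_pow_mul_geomZ s hs)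
    rw [map_mul, map_one, map_sub, map_one, map_pow, PowerSeries.map_X] at this
    rw [mul_comm] at this
    exact this
  · intro h
    rw [map_sub, map_one, map_pow, constantCoeff_X] at h
    simp [zero_pow hs.ne'] at h

lemma map_summandZ (k : ℕ) :
    PowerSeries.map (Int.castRingHom ℚ) (summandZ k) =
      PowerSeries.X ^ (2 * k ^ 2 + 2 * k) *
        (∏ j ∈ Finset.range (k + 1),
          (1 - PowerSeries.X ^ (2 * j + 1) : PowerSeries ℚ)⁻¹) ^ 2 := by
  rw [summandZ, map_mul, map_pow, PowerSeries.map_X, map_pow, map_prod]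
  congr 2
  refine Finset.prod_congr rfl fun j _ => map_geomZ _ (by omega)

/-- The coefficient `ω(n)` of `q^n` in Ramanujan's third order mock theta function
`ω(q) = Σ_{k≥0} q^{2k²+2k} / ∏_{j=0}^{k} (1 − q^{2j+1})²`, computed in `ℚ[[q]]`.
Since the `k`-th summand has order `2k²+2k ≥ k`, truncating the sum at `k = n`
captures the coefficient of `q^n`. -/
noncomputable def mockOmegaCoeff (n : ℕ) : ℚ :=
  ∑ k ∈ Finset.range (n + 1),
    PowerSeries.coeff n
      (PowerSeries.X ^ (2 * k ^ 2 + 2 * k) *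
        (∏ j ∈ Finset.range (k + 1), (1 - PowerSeries.X ^ (2 * j + 1) : PowerSeries ℚ)⁻¹) ^ 2)

/-- When `n` is odd, `ω(n)` is even. -/
theorem mockOmegaCoeff_even_of_odd (n : ℕ) (hn : Odd n) :
    ∃ m : ℤ, mockOmegaCoeff n = 2 * m := by
  have key : mockOmegaCoeff n =
      ((∑ k ∈ Finset.range (n + 1), PowerSeries.coeff n (summandZ k) : ℤ) : ℚ) := by
    rw [mockOmegaCoeff]
    push_cast
    refine Finset.sum_congr rfl fun k _ => ?_
    rw [← map_summandZ, PowerSeries.coeff_map]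
    simp
  have hdvd : (2 : ℤ) ∣ ∑ k ∈ Finset.range (n + 1), PowerSeries.coeff n (summandZ k) := by
    refine Finset.dvd_sum fun k _ => ?_
    exact even_summand _ hn ⟨k ^ 2 + k, by ring⟩
  obtain ⟨m, hm⟩ := hdvd
  exact ⟨m, by rw [key, hm]; push_cast; ring⟩
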